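/- arXiv:1707.03488 — 6 statements merged into one kernel-verified Lean document; each statement's English description precedes it below -/
import Mathlib

section
/- Fix a, b > 0 and s ∈ (−1, 1). Define y(x) = (2b/π)·arcsin(s·(cos(πx/(2a)))^((a/b)²)) for x ∈ (−a, a). Then for every x ∈ (−a, a), y is differentiable at x with derivative y'(x) = −(a/b)·tan(πx/(2a))·tan(π·y(x)/(2b)); that is, y solves the separable ODE satisfied by the gradient flow lines of the eigenfunction ψ_{a,b}(x₁,x₂) = 2 sin(πx₁/(2a)) cos(πx₂/(2b)). -/
open Real

theorem gradient_flow_line_ode (a b s : ℝ) (ha : 0 < a) (hb : 0 < b)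
    (hs : s ∈ Set.Ioo (-1 : ℝ) 1)
    (y : ℝ → ℝ)
    (hy : ∀ x, y x = (2 * b / π) * arcsin (s * cos (π * x / (2 * a)) ^ ((a / b) ^ 2))) :
    ∀ x ∈ Set.Ioo (-a) a,
      HasDerivAt y (-(a / b) * tan (π * x / (2 * a)) * tan (π * y x / (2 * b))) x := by
  obtain ⟨hs1, hs2⟩ := hs
  intro x hx
  obtain ⟨hx1, hx2⟩ := hx
  have hπ := Real.pi_pos
  set c : ℝ := (a / b) ^ 2 with hc
  set u : ℝ := π * x / (2 * a) with hu
  have hub : u ∈ Set.Ioo (-(π/2)) (π/2) := by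
    constructor
    · rw [hu, lt_div_iff₀ (by linarith : (0:ℝ) < 2 * a)]
      nlinarith
    · rw [hu, div_lt_iff₀ (by linarith : (0:ℝ) < 2 * a)]
      nlinarith
  have hcu : 0 < cos u := Real.cos_pos_of_mem_Ioo hub
  have hcu1 : cos u ≤ 1 := Real.cos_le_one u
  have hcpos : (0:ℝ) < c := by positivity
  have hrp : 0 < cos u ^ c := Real.rpow_pos_of_pos hcu c
  have hrp1 : cos u ^ c ≤ 1 := Real.rpow_le_one hcu.le hcu1 hcpos.le
  set t : ℝ := s * cos u ^ c with ht
  have htabs : |t| < 1 := by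
    rw [ht, abs_mul, abs_of_pos hrp]
    calc |s| * cos u ^ c ≤ |s| * 1 := by
          exact mul_le_mul_of_nonneg_left hrp1 (abs_nonneg s)
      _ < 1 := by rw [mul_one]; exact abs_lt.mpr ⟨hs1, hs2⟩
  have ht1 : t ≠ -1 := by intro h; rw [h] at htabs; simp at htabs
  have ht2 : t ≠ 1 := by intro h; rw [h] at htabs; simp at htabs
  have htsq : 0 < 1 - t ^ 2 := by nlinarith [abs_lt.mp htabs, sq_abs t]
  have hsqrt : Real.sqrt (1 - t ^ 2) ≠ 0 := by positivity
  -- derivative chain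
  have hdu : HasDerivAt (fun x : ℝ => π * x / (2 * a)) (π / (2 * a)) x := by
    simpa using ((hasDerivAt_id x).const_mul π).div_const (2 * a)
  have hdcos : HasDerivAt (fun x : ℝ => cos (π * x / (2 * a)))
      (-sin u * (π / (2 * a))) x := by
    have := (Real.hasDerivAt_cos u).comp x hdu; exact this
  have hdrpow : HasDerivAt (fun x : ℝ => cos (π * x / (2 * a)) ^ c)
      (c * cos u ^ (c - 1) * (-sin u * (π / (2 * a)))) x :=
    by have := (Real.hasDerivAt_rpow_const (p := c) (Or.inl hcu.ne')).comp x hdcos; exact this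
  have hdst := hdrpow.const_mul s
  have hdarc := (Real.hasDerivAt_arcsin ht1 ht2).comp x hdst
  have hdfin := hdarc.const_mul (2 * b / π)
  have hyfun : y = fun x : ℝ => (2 * b / π) * arcsin (s * cos (π * x / (2 * a)) ^ c) :=
    funext hy
  have hyx : π * y x / (2 * b) = arcsin t := by
    rw [hy x]
    field_simp
    rfl
  rw [hyx, Real.tan_arcsin, hyfun]
  convert hdfin using 1
  case e'_4 => rfl
  case e'_5 => rfl
  case e'_8 => rfl
  rw [Real.tan_eq_sin_div_cos, Real.rpow_sub_one hcu.ne', ht, hc]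
  have key : ∀ S C P D : ℝ, C ≠ 0 → D ≠ 0 →
      -(a / b) * (S / C) * (s * P / D) =
        2 * b / π * (1 / D * (s * ((a / b) ^ 2 * (P / C) * (-S * (π / (2 * a)))))) := by
    intro S C P D hC hD
    field_simp
  exact key _ _ _ _ hcu.ne' hsqrt
end

section
/- Fix a, b > 0. For every x ∈ (0, a), the function γ_{a,b} is differentiable at x and γ_{a,b}'(x) = −(a/b)·tan(πx/(2a))·tan(π·γ_{a,b}(x)/(2b)). -/
open Real

/-- The boundary curve of the star-like Neumann domain. -/
noncomputable def gammaAB (a b x : ℝ) : ℝ :=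
  (2 * b / π) * arcsin (cos (π * x / (2 * a)) ^ ((a / b) ^ 2))

theorem gamma_ode (a b : ℝ) (ha : 0 < a) (hb : 0 < b) :
    ∀ x ∈ Set.Ioo (0 : ℝ) a,
      HasDerivAt (gammaAB a b)
        (-(a / b) * tan (π * x / (2 * a)) * tan (π * gammaAB a b x / (2 * b))) x := by
  intro x hx
  obtain ⟨hx0, hxa⟩ := hx
  have hπ := Real.pi_pos
  set k : ℝ := (a / b) ^ 2 with hk
  have hkpos : 0 < k := by positivity
  have hu0 : 0 < π * x / (2 * a) := by positivity
  have huπ : π * x / (2 * a) < π / 2 := by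
    rw [div_lt_div_iff₀ (by positivity) two_pos]
    nlinarith
  set u : ℝ := π * x / (2 * a) with hu
  have hc : 0 < cos u := Real.cos_pos_of_mem_Ioo ⟨by linarith, huπ⟩
  have hc1 : cos u < 1 := by
    have := Real.cos_lt_cos_of_nonneg_of_le_pi (le_refl (0:ℝ)) (by linarith) hu0
    simpa using this
  have hsin : 0 < sin u := Real.sin_pos_of_pos_of_lt_pi hu0 (by linarith)
  set t : ℝ := cos u ^ k with ht
  have ht0 : 0 < t := Real.rpow_pos_of_pos hc k
  have ht1 : t < 1 := Real.rpow_lt_one hc.le hc1 hkpos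
  have hsq : 0 < 1 - t ^ 2 := by nlinarith
  have hsqrt : Real.sqrt (1 - t ^ 2) ≠ 0 := (Real.sqrt_pos.mpr hsq).ne'
  -- derivative chain
  have h1 : HasDerivAt (fun y : ℝ => π * y / (2 * a)) (π / (2 * a)) x := by
    simpa using ((hasDerivAt_id x).const_mul π).div_const (2 * a)
  have h2 : HasDerivAt (fun y : ℝ => cos (π * y / (2 * a))) (-sin u * (π / (2 * a))) x := h1.cos
  have h3 : HasDerivAt (fun y : ℝ => cos (π * y / (2 * a)) ^ k)
      (-sin u * (π / (2 * a)) * k * cos u ^ (k - 1)) x :=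
    h2.rpow_const (Or.inl hc.ne')
  have h4 : HasDerivAt (fun y : ℝ => arcsin (cos (π * y / (2 * a)) ^ k))
      (1 / Real.sqrt (1 - t ^ 2) * (-sin u * (π / (2 * a)) * k * cos u ^ (k - 1))) x :=
    by have := (Real.hasDerivAt_arcsin (x := t) (by linarith) ht1.ne).comp x h3; exact this
  have h5 : HasDerivAt (gammaAB a b)
      ((2 * b / π) * (1 / Real.sqrt (1 - t ^ 2) * (-sin u * (π / (2 * a)) * k * cos u ^ (k - 1)))) x := by
    unfold gammaAB
    exact h4.const_mul (2 * b / π)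
  have hγ : π * gammaAB a b x / (2 * b) = arcsin t := by
    rw [gammaAB]
    field_simp
    rw [ht, hk, div_pow]
  convert h5 using 1
  rw [hγ, Real.tan_arcsin, Real.tan_eq_sin_div_cos u,
    Real.rpow_sub_one hc.ne' k, hk, ht]
  field_simp
  rw [show a ^ 2 / b ^ 2 = k by rw [hk]; ring]
end

section
/- Fix a, b > 0. For every x ∈ (0, a), the gradient of ψ_{a,b} at the boundary point (x, γ_{a,b}(x)) is tangent to the boundary curve: ∂₂ψ_{a,b}(x, γ_{a,b}(x)) = γ_{a,b}'(x) · ∂₁ψ_{a,b}(x, γ_{a,b}(x)). Equivalently, the normal derivative of ψ_{a,b} along the Neumann line {(x, γ_{a,b}(x)) : 0 < x < a} vanishes. -/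
open Real

/-- The torus eigenfunction restricted to the star-like Neumann domain. -/
noncomputable def psiAB (a b : ℝ) (p : ℝ × ℝ) : ℝ :=
  2 * sin (π * p.1 / (2 * a)) * cos (π * p.2 / (2 * b))

theorem gradient_tangent_to_boundary (a b : ℝ) (ha : 0 < a) (hb : 0 < b) :
    ∀ x ∈ Set.Ioo (0 : ℝ) a,
      deriv (fun t => psiAB a b (x, t)) (gammaAB a b x) =
        deriv (gammaAB a b) x * deriv (fun t => psiAB a b (t, gammaAB a b x)) x := by
  intro x hx
  obtain ⟨hx0, hxa⟩ := hx
  have hπ := Real.pi_pos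
  set θ : ℝ := π * x / (2 * a) with hθ
  have hθ0 : 0 < θ := by positivity
  have hθlt : θ < π / 2 := by
    rw [hθ, div_lt_div_iff₀ (by positivity) (by norm_num)]
    nlinarith
  have hc0 : 0 < cos θ := Real.cos_pos_of_mem_Ioo ⟨by linarith, hθlt⟩
  have hc1 : cos θ < 1 := by
    calc cos θ < cos 0 := by
          apply Real.cos_lt_cos_of_nonneg_of_le_pi le_rfl (by linarith) hθ0
      _ = 1 := Real.cos_zero
  set k : ℝ := (a / b) ^ 2 with hkdef
  have hk : 0 < k := by positivity
  set u : ℝ := cos θ ^ k with hu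
  have hu0 : 0 < u := Real.rpow_pos_of_pos hc0 k
  have hu1 : u < 1 := Real.rpow_lt_one hc0.le hc1 hk
  have hsq : 0 < 1 - u ^ 2 := by nlinarith
  have hs : 0 < Real.sqrt (1 - u ^ 2) := Real.sqrt_pos.mpr hsq
  set γ : ℝ := gammaAB a b x with hγ
  have hγval : π * γ / (2 * b) = arcsin u := by
    rw [hγ, gammaAB, ← hθ, ← hkdef, ← hu]
    field_simp
  have hsinγ : sin (π * γ / (2 * b)) = u := by
    rw [hγval]; exact Real.sin_arcsin (by linarith) hu1.le
  have hcosγ : cos (π * γ / (2 * b)) = Real.sqrt (1 - u ^ 2) := by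
    rw [hγval, Real.cos_arcsin]
  -- LHS derivative
  have h1 : HasDerivAt (fun t : ℝ => π * t / (2 * b)) (π / (2 * b)) γ := by
    simpa using ((hasDerivAt_id γ).const_mul π).div_const (2 * b)
  have hL : HasDerivAt (fun t => psiAB a b (x, t))
      (2 * sin θ * (-sin (π * γ / (2 * b)) * (π / (2 * b)))) γ := by
    have := (h1.cos).const_mul (2 * sin θ)
    simpa [psiAB, mul_assoc] using this
  -- inner derivative for first coordinate
  have h2 : HasDerivAt (fun t : ℝ => π * t / (2 * a)) (π / (2 * a)) x := by
    simpa using ((hasDerivAt_id x).const_mul π).div_const (2 * a)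
  have hR : HasDerivAt (fun t => psiAB a b (t, γ))
      ((2 * (cos θ * (π / (2 * a)))) * cos (π * γ / (2 * b))) x := by
    have := ((h2.sin).const_mul 2).mul_const (cos (π * γ / (2 * b)))
    simpa [psiAB, mul_assoc] using this
  -- derivative of gamma
  have hrpow : HasDerivAt (fun y : ℝ => cos (π * y / (2 * a)) ^ k)
      ((-sin θ * (π / (2 * a))) * k * cos θ ^ (k - 1)) x :=
    (h2.cos).rpow_const (Or.inl hc0.ne')
  have harcsin : HasDerivAt (gammaAB a b)
      ((2 * b / π) * ((1 / Real.sqrt (1 - u ^ 2)) *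
        ((-sin θ * (π / (2 * a))) * k * cos θ ^ (k - 1)))) x := by
    have h3 := (Real.hasDerivAt_arcsin (by linarith : u ≠ -1) hu1.ne).comp x hrpow
    have := h3.const_mul (2 * b / π)
    rw [show gammaAB a b = fun y => 2 * b / π * arcsin (cos (π * y / (2 * a)) ^ k) from rfl]
    simpa [Function.comp, hu] using this
  rw [hL.deriv, harcsin.deriv, hR.deriv, hsinγ, hcosγ]
  have hck : cos θ ^ (k - 1) * cos θ = u := by
    rw [hu, ← Real.rpow_add_one hc0.ne' (k - 1)]
    ring_nf
  have hss : Real.sqrt (1 - u ^ 2) * Real.sqrt (1 - u ^ 2) = 1 - u ^ 2 :=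
    Real.mul_self_sqrt hsq.le
  have hkval : k * b ^ 2 = a ^ 2 := by
    rw [hkdef]; field_simp
  field_simp
  linear_combination (sin θ * b ^ 2 * k) * hck + (sin θ * u) * hkval
end

section
/- For every real α ≥ 1, the function f(x) = arcsin((cos x)^α) is convex on the interval [0, π/2]. Consequently, for all 0 < b ≤ a, the boundary function γ_{a,b} is convex on [0, a]. -/
open Real


lemma aux_h_nonneg (α : ℝ) (hα : 1 ≤ α) {u : ℝ} (h0 : 0 ≤ u) (h1 : u ≤ 1) :
    u ≤ (α - 1) * (1 - u) + u ^ α := by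
  set F : ℝ → ℝ := fun u => (α - 1) * (1 - u) + u ^ α - u with hF
  have hanti : AntitoneOn F (Set.Icc 0 1) := by
    apply antitoneOn_of_hasDerivWithinAt_nonpos (convex_Icc 0 1)
      (f' := fun u => α * u ^ (α - 1) - α)
    · apply ContinuousOn.sub
      apply ContinuousOn.add
      · fun_prop
      · exact continuousOn_id.rpow_const fun x _ => Or.inr (by linarith)
      · fun_prop
    · intro u hu
      rw [interior_Icc] at hu
      have h := Real.hasDerivAt_rpow_const (x := u) (p := α) (Or.inl hu.1.ne')
      have : HasDerivAt F ((α - 1) * (0 - 1) + α * u ^ (α - 1) - 1) u := by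
        exact (((hasDerivAt_const u (1:ℝ)).sub (hasDerivAt_id u)).const_mul (α-1) |>.add h).sub
          (hasDerivAt_id u)
      have h2 : (α - 1) * (0 - 1) + α * u ^ (α - 1) - 1 = α * u ^ (α - 1) - α := by ring
      rw [h2] at this
      exact (this.hasDerivWithinAt).mono (by rw [interior_Icc])
    · intro u hu
      rw [interior_Icc] at hu
      have : u ^ (α - 1) ≤ 1 := Real.rpow_le_one hu.1.le hu.2.le (by linarith)
      nlinarith
  have h := hanti ⟨h0, h1⟩ ⟨zero_le_one, le_refl 1⟩ h1
  simp only [hF, Real.one_rpow] at h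
  linarith

lemma aux_key (α : ℝ) (hα : 1 ≤ α) {c s : ℝ} (hc0 : 0 < c) (hc1 : c < 1)
    (hcs : s ^ 2 = 1 - c ^ 2) :
    0 ≤ (α * (α - 1) * c ^ (α - 2) * s ^ 2 - α * c ^ α) * (1 - (c ^ α) ^ 2)
        + c ^ α * (α * c ^ (α - 1) * s) ^ 2 := by
  have hα0 : (0:ℝ) < α := by linarith
  have hA : 0 ≤ c ^ (α - 2) := Real.rpow_nonneg hc0.le _
  have h1 : c ^ (α - 1) = c ^ (α - 2) * c := by
    rw [← Real.rpow_add_one hc0.ne' (α - 2)]; congr 1; ring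
  have h2 : c ^ α = c ^ (α - 2) * c ^ 2 := by
    rw [show c ^ (2:ℕ) = c ^ (1:ℝ) * c ^ (1:ℝ) by rw [Real.rpow_one]; ring,
      ← Real.rpow_add hc0, ← Real.rpow_add hc0]
    norm_num
  have hu1 : c ^ 2 ≤ 1 := by nlinarith
  have hu0 : (0:ℝ) ≤ c ^ 2 := sq_nonneg c
  have hmain := aux_h_nonneg α hα hu0 hu1
  have h3 : (c ^ 2 : ℝ) ^ α = (c ^ (α-2) * c ^ 2) ^ 2 := by
    rw [← h2, ← Real.rpow_natCast c 2, ← Real.rpow_mul hc0.le, mul_comm,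
      Real.rpow_mul hc0.le, Real.rpow_natCast]
  rw [h3] at hmain
  have key : (α * (α - 1) * c ^ (α - 2) * s ^ 2 - α * c ^ α) * (1 - (c ^ α) ^ 2)
        + c ^ α * (α * c ^ (α - 1) * s) ^ 2
      = α * c ^ (α - 2) * ((α - 1) * (1 - c ^ 2) + (c ^ (α - 2) * c ^ 2) ^ 2 - c ^ 2) := by
    rw [h1, h2]
    linear_combination (α * (α-1) * c ^ (α-2) * (1 - (c ^ (α-2) * c^2)^2) + α^2 * (c ^ (α-2))^3 * c^4) * hcs
  rw [key]
  have : (0:ℝ) ≤ (α - 1) * (1 - c ^ 2) + (c ^ (α - 2) * c ^ 2) ^ 2 - c ^ 2 := by linarith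
  positivity

lemma aux_part1 (α : ℝ) (hα : 1 ≤ α) :
    ConvexOn ℝ (Set.Icc 0 (π / 2)) (fun x : ℝ => arcsin (cos x ^ α)) := by
  have hα0 : (0:ℝ) < α := by linarith
  set f₁ : ℝ → ℝ := fun x =>
    -(α * cos x ^ (α - 1) * sin x) / sqrt (1 - (cos x ^ α) ^ 2) with hf₁
  set f₂ : ℝ → ℝ := fun x =>
    ((α * (α - 1) * cos x ^ (α - 2) * sin x ^ 2 - α * cos x ^ α) * (1 - (cos x ^ α) ^ 2)
      + cos x ^ α * (α * cos x ^ (α - 1) * sin x) ^ 2)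
      / (sqrt (1 - (cos x ^ α) ^ 2)) ^ 3 with hf₂
  -- basic facts on the interior
  have facts : ∀ x ∈ Set.Ioo (0:ℝ) (π/2), 0 < cos x ∧ cos x < 1 ∧ 0 < sin x ∧
      0 < cos x ^ α ∧ cos x ^ α < 1 ∧ 0 < 1 - (cos x ^ α) ^ 2 ∧
      0 < sqrt (1 - (cos x ^ α) ^ 2) := by
    intro x hx
    have hπ := pi_pos
    have hc0 : 0 < cos x := cos_pos_of_mem_Ioo ⟨by linarith [hx.1], hx.2⟩
    have hc1 : cos x < 1 := by
      have := Real.cos_lt_cos_of_nonneg_of_le_pi (le_refl 0) (by linarith [hx.2]) hx.1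
      simpa using this
    have hs : 0 < sin x := sin_pos_of_pos_of_lt_pi hx.1 (by linarith [hx.2])
    have hg0 : 0 < cos x ^ α := Real.rpow_pos_of_pos hc0 α
    have hg1 : cos x ^ α < 1 := Real.rpow_lt_one hc0.le hc1 hα0
    have hq : 0 < 1 - (cos x ^ α) ^ 2 := by nlinarith
    exact ⟨hc0, hc1, hs, hg0, hg1, hq, Real.sqrt_pos.2 hq⟩
  -- derivative of g x = cos x ^ α
  have hg : ∀ x ∈ Set.Ioo (0:ℝ) (π/2),
      HasDerivAt (fun x : ℝ => cos x ^ α) (α * cos x ^ (α - 1) * (-sin x)) x := by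
    intro x hx
    obtain ⟨hc0, -⟩ := facts x hx
    have := (Real.hasDerivAt_rpow_const (x := cos x) (p := α)
      (Or.inl hc0.ne')).comp x (Real.hasDerivAt_cos x)
    simpa [mul_assoc, Function.comp_def] using this
  -- first derivative
  have hd1 : ∀ x ∈ Set.Ioo (0:ℝ) (π/2),
      HasDerivAt (fun x : ℝ => arcsin (cos x ^ α)) (f₁ x) x := by
    intro x hx
    obtain ⟨hc0, hc1, hs, hg0, hg1, hq, hqs⟩ := facts x hx
    have harc : HasDerivAt arcsin (1 / sqrt (1 - (cos x ^ α) ^ 2)) (cos x ^ α) :=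
      Real.hasDerivAt_arcsin (by linarith) (by linarith)
    have h := harc.comp x (hg x hx)
    refine h.congr_deriv (Eq.symm ?_)
    simp only [hf₁]
    field_simp
  -- second derivative
  have hd2 : ∀ x ∈ Set.Ioo (0:ℝ) (π/2), HasDerivAt f₁ (f₂ x) x := by
    intro x hx
    obtain ⟨hc0, hc1, hs, hg0, hg1, hq, hqs⟩ := facts x hx
    -- derivative of the numerator
    have hpow1 : HasDerivAt (fun x : ℝ => cos x ^ (α - 1))
        ((α - 1) * cos x ^ (α - 2) * (-sin x)) x := by
      have := (Real.hasDerivAt_rpow_const (x := cos x) (p := α - 1)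
        (Or.inl hc0.ne')).comp x (Real.hasDerivAt_cos x)
      have e : α - 1 - 1 = α - 2 := by ring
      simpa [e, mul_assoc, Function.comp_def] using this
    have hnum : HasDerivAt (fun x : ℝ => -(α * cos x ^ (α - 1) * sin x))
        (-((α * ((α - 1) * cos x ^ (α - 2) * (-sin x))) * sin x
            + α * cos x ^ (α - 1) * cos x)) x := by
      exact (((hpow1.const_mul α).mul (Real.hasDerivAt_sin x)).neg)
    -- derivative of the denominator
    have hw : HasDerivAt (fun x : ℝ => 1 - (cos x ^ α) ^ 2)
        (-((2:ℕ) * (cos x ^ α) ^ 1 * (α * cos x ^ (α - 1) * (-sin x)))) x :=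
      ((hg x hx).pow 2).const_sub 1
    have hsqrt : HasDerivAt (fun x : ℝ => sqrt (1 - (cos x ^ α) ^ 2))
        (1 / (2 * sqrt (1 - (cos x ^ α) ^ 2)) *
          (-((2:ℕ) * (cos x ^ α) ^ 1 * (α * cos x ^ (α - 1) * (-sin x))))) x :=
      (Real.hasDerivAt_sqrt hq.ne').comp x hw
    have hdiv := hnum.div hsqrt hqs.ne'
    refine hdiv.congr_deriv (Eq.symm ?_)
    simp only [hf₂]
    have hq2 : sqrt (1 - (cos x ^ α) ^ 2) ^ 2 = 1 - (cos x ^ α) ^ 2 :=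
      Real.sq_sqrt hq.le
    have hBA : cos x ^ (α - 1) = cos x ^ (α - 2) * cos x := by
      rw [← Real.rpow_add_one hc0.ne' (α - 2)]; congr 1; ring
    have hGB : cos x ^ α = cos x ^ (α - 1) * cos x := by
      rw [← Real.rpow_add_one hc0.ne' (α - 1)]; congr 1; ring
    rw [hGB, hBA] at hq2 hqs ⊢
    set q := sqrt (1 - (cos x ^ (α - 2) * cos x * cos x) ^ 2) with hqdef
    rw [← hq2]
    push_cast
    field_simp
    ring
  refine convexOn_of_hasDerivWithinAt2_nonneg (convex_Icc _ _) ?_ ?_ ?_ ?_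
    (f' := f₁) (f'' := f₂)
  · exact (Real.continuous_arcsin.comp
      (Real.continuous_cos.rpow_const fun x => Or.inr hα0.le)).continuousOn
  · intro x hx
    rw [interior_Icc] at hx ⊢
    exact (hd1 x hx).hasDerivWithinAt
  · intro x hx
    rw [interior_Icc] at hx ⊢
    exact (hd2 x hx).hasDerivWithinAt
  · intro x hx
    rw [interior_Icc] at hx
    obtain ⟨hc0, hc1, hs, hg0, hg1, hq, hqs⟩ := facts x hx
    have hcs : sin x ^ 2 = 1 - cos x ^ 2 := by
      nlinarith [sin_sq_add_cos_sq x]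
    have hnum := aux_key α hα hc0 hc1 hcs
    simp only [hf₂]
    positivity


theorem arcsin_cos_rpow_convex :
    (∀ α : ℝ, 1 ≤ α →
        ConvexOn ℝ (Set.Icc 0 (π / 2)) (fun x : ℝ => arcsin (cos x ^ α))) ∧
      ∀ a b : ℝ, 0 < b → b ≤ a → ConvexOn ℝ (Set.Icc 0 a) (gammaAB a b) := by
  refine ⟨fun α hα => aux_part1 α hα, ?_⟩
  intro a b hb hba
  have hπ := pi_pos
  have ha : 0 < a := lt_of_lt_of_le hb hba
  have hab : 1 ≤ a / b := (one_le_div hb).2 hba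
  have hα : 1 ≤ (a / b) ^ 2 := by nlinarith
  have F := aux_part1 ((a / b) ^ 2) hα
  have hmem : ∀ z ∈ Set.Icc (0:ℝ) a, π * z / (2 * a) ∈ Set.Icc (0:ℝ) (π / 2) := by
    intro z hz
    constructor
    · exact div_nonneg (mul_nonneg hπ.le hz.1) (by positivity)
    · rw [div_le_div_iff₀ (by positivity) (by norm_num)]
      nlinarith [hz.2]
  refine ⟨convex_Icc 0 a, ?_⟩
  intro x hx y hy t r ht hr htr
  have h := F.2 (hmem x hx) (hmem y hy) ht hr htr
  simp only [smul_eq_mul] at h ⊢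
  have harg : π * (t * x + r * y) / (2 * a) =
      t * (π * x / (2 * a)) + r * (π * y / (2 * a)) := by
    field_simp
  simp only [gammaAB, harg]
  calc (2 * b / π) * arcsin (cos (t * (π * x / (2 * a)) + r * (π * y / (2 * a))) ^ ((a/b)^2))
      ≤ (2 * b / π) * (t * arcsin (cos (π * x / (2 * a)) ^ ((a/b)^2))
          + r * arcsin (cos (π * y / (2 * a)) ^ ((a/b)^2))) := by
        apply mul_le_mul_of_nonneg_left h (by positivity)
    _ = t * ((2 * b / π) * arcsin (cos (π * x / (2 * a)) ^ ((a/b)^2)))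
          + r * ((2 * b / π) * arcsin (cos (π * y / (2 * a)) ^ ((a/b)^2))) := by ring
end

section
/- For all a, b > 0, the function x ↦ (cos(πx/(2a)))^((a/b)²)·exp(π²x²/(8b²)) is strictly decreasing on [0, a); equivalently, R_b is strictly increasing on [0, a). -/
open Real

theorem cos_rpow_mul_exp_strictAnti (a b : ℝ) (ha : 0 < a) (hb : 0 < b) :
    StrictAntiOn
      (fun x : ℝ => cos (π * x / (2 * a)) ^ ((a / b) ^ 2) * exp (π ^ 2 * x ^ 2 / (8 * b ^ 2)))
      (Set.Ico 0 a) := by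
  have hc : (0:ℝ) < (a / b) ^ 2 := by positivity
  have hcospos : ∀ x ∈ Set.Ico (0:ℝ) a, 0 < cos (π * x / (2 * a)) := by
    intro x hx
    apply Real.cos_pos_of_mem_Ioo
    constructor
    · have hx0 : (0:ℝ) ≤ x := hx.1
      have : (0:ℝ) ≤ π * x / (2 * a) := by positivity
      linarith [pi_pos]
    · rw [div_lt_iff₀ (by linarith)]
      have : π * x < π * a := by
        exact mul_lt_mul_of_pos_left hx.2 pi_pos
      linarith
  apply strictAntiOn_of_deriv_neg (convex_Ico 0 a)
  · apply ContinuousOn.mul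
    · apply ContinuousOn.rpow_const
      · fun_prop
      · intro x hx
        exact Or.inl (hcospos x hx).ne'
    · fun_prop
  · rw [interior_Ico]
    intro x hx
    obtain ⟨hx0, hxa⟩ := hx
    set u : ℝ := π * x / (2 * a) with hu
    have hu0 : 0 < u := by positivity
    have hu2 : u < π / 2 := by
      rw [hu, div_lt_div_iff₀ (by linarith) (by norm_num)]
      nlinarith [pi_pos]
    have hcos : 0 < cos u := hcospos x ⟨hx0.le, hxa⟩
    have htan : u < tan u := Real.lt_tan hu0 hu2
    -- key inequality: u * cos u < sin u
    have hs : u * cos u < sin u := by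
      have := mul_lt_mul_of_pos_right htan hcos
      rwa [Real.tan_mul_cos hcos.ne'] at this
    have hs2 : π * x * cos u < 2 * a * sin u := by
      have h2a : (0:ℝ) < 2 * a := by linarith
      have := mul_lt_mul_of_pos_left hs h2a
      rw [hu] at this
      field_simp at this
      nlinarith [this]
    -- derivative computation
    have h1 : HasDerivAt (fun x : ℝ => π * x / (2 * a)) (π / (2 * a)) x := by
      simpa using ((hasDerivAt_id x).const_mul π).div_const (2 * a)
    have h2 : HasDerivAt (fun x : ℝ => cos (π * x / (2 * a))) (-sin u * (π / (2 * a))) x :=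
      h1.cos
    have h3 : HasDerivAt (fun x : ℝ => cos (π * x / (2 * a)) ^ ((a / b) ^ 2))
        (-sin u * (π / (2 * a)) * ((a / b) ^ 2) * cos u ^ ((a / b) ^ 2 - 1)) x :=
      h2.rpow_const (Or.inl hcos.ne')
    have h4 : HasDerivAt (fun x : ℝ => π ^ 2 * x ^ 2 / (8 * b ^ 2))
        (π ^ 2 * (2 * x) / (8 * b ^ 2)) x := by
      have := ((hasDerivAt_pow 2 x).const_mul (π ^ 2)).div_const (8 * b ^ 2)
      simpa using this
    have h5 : HasDerivAt (fun x : ℝ => exp (π ^ 2 * x ^ 2 / (8 * b ^ 2)))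
        (exp (π ^ 2 * x ^ 2 / (8 * b ^ 2)) * (π ^ 2 * (2 * x) / (8 * b ^ 2))) x := h4.exp
    have h6 := h3.mul h5
    rw [(show HasDerivAt (fun x : ℝ => cos (π * x / (2 * a)) ^ ((a / b) ^ 2) * exp (π ^ 2 * x ^ 2 / (8 * b ^ 2))) _ x from h6).deriv]
    set P : ℝ := cos u ^ ((a / b) ^ 2 - 1) with hP
    set E : ℝ := exp (π ^ 2 * x ^ 2 / (8 * b ^ 2)) with hE
    have hPpos : 0 < P := Real.rpow_pos_of_pos hcos _
    have hEpos : 0 < E := exp_pos _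
    have hpow : cos u ^ ((a / b) ^ 2) = P * cos u := by
      rw [hP, ← Real.rpow_add_one hcos.ne', sub_add_cancel]
    rw [hpow]
    have hfac : -sin u * (π / (2 * a)) * (a / b) ^ 2 * P * E +
        P * cos u * (E * (π ^ 2 * (2 * x) / (8 * b ^ 2))) =
        -(P * E * (π / (4 * b ^ 2)) * (2 * a * sin u - π * x * cos u)) := by
      field_simp
      ring
    rw [hfac]
    have hpos : 0 < P * E * (π / (4 * b ^ 2)) * (2 * a * sin u - π * x * cos u) := by
      apply mul_pos
      · positivity
      · linarith
    linarith
end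

section
/- Fix a, b > 0. Then γ_{a,b}(x) − (b − |x|) = O(|x|³) as x → 0; that is, at the point w = (0, b) the star-like Neumann domain has a wedge with opening angle π/2. -/
open Real Asymptotics Filter

set_option maxHeartbeats 4000000

lemma log_cos_bound {s : ℝ} (h0 : 0 ≤ s) (h1 : s ≤ 1/2) :
    |Real.log (Real.cos s) + s^2/2| ≤ s^4 := by
  have hs1 : |s| ≤ 1 := by rw [abs_of_nonneg h0]; linarith
  have hcb := Real.cos_bound hs1
  rw [abs_of_nonneg h0] at hcb
  rw [abs_le] at hcb
  have hs2 : s^2 ≤ 1/4 := by nlinarith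
  have hs4 : s^4 ≤ 1/16 := by nlinarith [sq_nonneg s, sq_nonneg (s^2)]
  have hs4' : 0 ≤ s^4 := by positivity
  have hcpos : 0 < Real.cos s := by
    apply Real.cos_pos_of_mem_Ioo
    constructor <;> nlinarith [Real.pi_gt_three]
  have h2 := Real.log_le_sub_one_of_pos hcpos
  have h3 := Real.one_sub_inv_le_log_of_pos hcpos
  have hclow : 1 - s^2/2 - s^4*(5/96) ≤ Real.cos s := by linarith [hcb.1]
  have hXpos : (0:ℝ) < 1 + s^2/2 + s^4 := by positivity
  have h6 : s^6 ≤ s^4/4 := by nlinarith [hs2, hs4']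
  have h8 : s^8 ≤ s^4/16 := by nlinarith [hs4, hs4']
  have hkey : (Real.cos s)⁻¹ ≤ 1 + s^2/2 + s^4 := by
    have h9 : 1 ≤ Real.cos s * (1 + s^2/2 + s^4) := by
      nlinarith [mul_le_mul_of_nonneg_right hclow hXpos.le, h6, h8, hs4', sq_nonneg s]
    calc (Real.cos s)⁻¹ = (Real.cos s)⁻¹ * 1 := (mul_one _).symm
      _ ≤ (Real.cos s)⁻¹ * (Real.cos s * (1 + s^2/2 + s^4)) :=
          mul_le_mul_of_nonneg_left h9 (inv_nonneg.2 hcpos.le)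
      _ = 1 + s^2/2 + s^4 := by field_simp
  rw [abs_le]
  constructor
  · nlinarith [sq_nonneg s]
  · nlinarith [sq_nonneg s]

lemma exp_lip {p q : ℝ} (hp : p ≤ 0) (hq : q ≤ 0) :
    |Real.exp p - Real.exp q| ≤ |p - q| := by
  wlog h : q ≤ p with H
  · rw [abs_sub_comm, abs_sub_comm p q]; exact H hq hp (le_of_not_ge h)
  rw [abs_of_nonneg (sub_nonneg.2 (Real.exp_le_exp.2 h)), abs_of_nonneg (sub_nonneg.2 h)]
  have h1 : Real.exp p ≤ 1 := Real.exp_le_one_iff.2 hp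
  have h2 : q - p + 1 ≤ Real.exp (q - p) := Real.add_one_le_exp _
  have h3 : Real.exp q = Real.exp p * Real.exp (q - p) := by
    rw [← Real.exp_add]; ring_nf
  calc Real.exp p - Real.exp q = Real.exp p * (1 - Real.exp (q - p)) := by rw [h3]; ring
    _ ≤ Real.exp p * (p - q) :=
        mul_le_mul_of_nonneg_left (by linarith) (Real.exp_pos p).le
    _ ≤ 1 * (p - q) := mul_le_mul_of_nonneg_right h1 (by linarith)
    _ = p - q := one_mul _

lemma key_est {r θ : ℝ} (hr : 0 < r) (h0 : 0 ≤ θ) (h1 : θ ≤ 1/2) (h2 : r * θ ≤ 1/2) :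
    |Real.arccos (Real.cos θ ^ (r^2)) - r * θ| ≤ 3*(r + r^3) * θ^3 := by
  rcases h0.eq_or_lt with rfl | hθ
  · simp [Real.cos_zero, Real.one_rpow, Real.arccos_one]
  have hπ3 := Real.pi_gt_three
  have hrθ0 : 0 < r * θ := mul_pos hr hθ
  have hc : 0 < Real.cos θ := by
    apply Real.cos_pos_of_mem_Ioo; constructor <;> nlinarith
  have hcrθ : 0 < Real.cos (r*θ) := by
    apply Real.cos_pos_of_mem_Ioo; constructor <;> nlinarith
  have hcm : 0 < Real.cos (r*θ/2) := by
    apply Real.cos_pos_of_mem_Ioo; constructor <;> nlinarith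
  have hu : Real.cos θ ^ (r^2) = Real.exp (r^2 * Real.log (Real.cos θ)) := by
    rw [Real.rpow_def_of_pos hc, mul_comm]
  have hv : Real.cos (r*θ) = Real.exp (Real.log (Real.cos (r*θ))) := (Real.exp_log hcrθ).symm
  have hlθ := log_cos_bound h0 h1
  have hlrθ := log_cos_bound hrθ0.le h2
  have hlm := log_cos_bound (by linarith : (0:ℝ) ≤ r*θ/2) (by linarith)
  rw [abs_le] at hlθ hlrθ hlm
  have hlogθ : Real.log (Real.cos θ) ≤ 0 := Real.log_nonpos hc.le (Real.cos_le_one _)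
  have hlogrθ : Real.log (Real.cos (r*θ)) ≤ 0 := Real.log_nonpos hcrθ.le (Real.cos_le_one _)
  have hp0 : r^2 * Real.log (Real.cos θ) ≤ 0 :=
    mul_nonpos_of_nonneg_of_nonpos (sq_nonneg r) hlogθ
  have hA : r^2 * Real.log (Real.cos θ) ≤ r^2*θ^4 - r^2*θ^2/2 := by
    have h := mul_le_mul_of_nonneg_left
      (by linarith [hlθ.2] : Real.log (Real.cos θ) ≤ θ^4 - θ^2/2) (sq_nonneg r)
    nlinarith [h]
  have hB : -(r^2*θ^4) - r^2*θ^2/2 ≤ r^2 * Real.log (Real.cos θ) := by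
    have h := mul_le_mul_of_nonneg_left
      (by linarith [hlθ.1] : -(θ^4) - θ^2/2 ≤ Real.log (Real.cos θ)) (sq_nonneg r)
    nlinarith [h]
  have hC : Real.log (Real.cos (r*θ)) ≤ r^4*θ^4 - r^2*θ^2/2 := by nlinarith [hlrθ.2]
  have hD : -(r^4*θ^4) - r^2*θ^2/2 ≤ Real.log (Real.cos (r*θ)) := by nlinarith [hlrθ.1]
  have hθ2 : θ^2 ≤ 1/4 := by nlinarith
  have hrθ2 : (r*θ)^2 ≤ 1/4 := by nlinarith [hrθ0.le]
  -- |u - v| ≤ (r² + r⁴) θ⁴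
  have huv : |Real.cos θ ^ (r^2) - Real.cos (r*θ)| ≤ (r^2 + r^4) * θ^4 := by
    rw [hu, hv]
    refine (exp_lip hp0 hlogrθ).trans ?_
    rw [abs_le]
    constructor <;> linarith [hA, hB, hC, hD]
  set u := Real.cos θ ^ (r^2) with hu_def
  have hu_pos : 0 < u := Real.rpow_pos_of_pos hc _
  have hu_le1 : u ≤ 1 := by rw [hu]; exact Real.exp_le_one_iff.2 hp0
  have hφlt : Real.arccos u < π/2 := Real.arccos_lt_pi_div_two.2 hu_pos
  set φ := Real.arccos u with hφ_def
  have hφ0 : 0 ≤ φ := Real.arccos_nonneg _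
  -- lower bound φ ≥ rθ/2
  have hule : u ≤ Real.cos (r*θ/2) := by
    rw [hu, show Real.cos (r*θ/2) = Real.exp (Real.log (Real.cos (r*θ/2))) from
      (Real.exp_log hcm).symm]
    apply Real.exp_le_exp.2
    nlinarith [hA, hlm.1, hθ2, hrθ2, mul_nonneg (sq_nonneg r) (sq_nonneg θ), sq_nonneg (r*θ)]
  have hφge : r*θ/2 ≤ φ := by
    have hmem1 : u ∈ Set.Icc (-1:ℝ) 1 := ⟨by linarith, hu_le1⟩
    have hmem2 : Real.cos (r*θ/2) ∈ Set.Icc (-1:ℝ) 1 :=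
      ⟨Real.neg_one_le_cos _, Real.cos_le_one _⟩
    have := Real.strictAntiOn_arccos.antitoneOn hmem1 hmem2 hule
    rwa [Real.arccos_cos (by linarith) (by nlinarith)] at this
  have hcosφ : Real.cos φ = u := Real.cos_arccos (by linarith) hu_le1
  rcases eq_or_ne φ (r*θ) with he | hne
  · rw [he, sub_self, abs_zero]; positivity
  -- MVT on cos between min and max
  have hAB : min φ (r*θ) < max φ (r*θ) := min_lt_max.2 hne
  obtain ⟨ξ, hξ, hξeq⟩ := exists_hasDerivAt_eq_slope Real.cos (fun x => -Real.sin x) hAB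
    Real.continuousOn_cos (fun x _ => Real.hasDerivAt_cos x)
  have hBA : 0 < max φ (r*θ) - min φ (r*θ) := sub_pos.2 hAB
  have h6 : Real.cos (min φ (r*θ)) - Real.cos (max φ (r*θ))
      = Real.sin ξ * (max φ (r*θ) - min φ (r*θ)) := by
    have h := hξeq
    field_simp [hBA.ne'] at h
    nlinarith [h]
  -- sin ξ ≥ (3/8) r θ
  have hξlow : r*θ/2 ≤ ξ := le_trans (le_min hφge (by linarith)) hξ.1.le
  have hξhigh : ξ ≤ π/2 := by
    have : max φ (r*θ) ≤ π/2 := max_le hφlt.le (by nlinarith)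
    linarith [hξ.2]
  have hsinmono : Real.sin (r*θ/2) ≤ Real.sin ξ :=
    Real.sin_le_sin_of_le_of_le_pi_div_two (by linarith) hξhigh hξlow
  have hsincube : r*θ/2 - (r*θ/2)^3/4 < Real.sin (r*θ/2) :=
    by have := Real.sin_gt_sub_cube (x := r*θ/2) (by linarith); linarith [pow_pos (half_pos hrθ0) 3]
  have hsin : 3/8 * (r*θ) ≤ Real.sin ξ := by nlinarith [hrθ2, hrθ0.le]
  -- combine
  have h7 : |Real.cos (min φ (r*θ)) - Real.cos (max φ (r*θ))| = |u - Real.cos (r*θ)| := by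
    rcases le_total φ (r*θ) with h | h
    · rw [min_eq_left h, max_eq_right h, hcosφ]
    · rw [min_eq_right h, max_eq_left h, hcosφ, abs_sub_comm]
  have h8 : Real.sin ξ * (max φ (r*θ) - min φ (r*θ)) ≤ (r^2 + r^4) * θ^4 := by
    rw [← h6]
    calc Real.cos (min φ (r*θ)) - Real.cos (max φ (r*θ))
        ≤ |Real.cos (min φ (r*θ)) - Real.cos (max φ (r*θ))| := le_abs_self _
      _ = |u - Real.cos (r*θ)| := h7
      _ ≤ (r^2 + r^4) * θ^4 := huv
  have habs : |φ - r*θ| = max φ (r*θ) - min φ (r*θ) := by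
    rcases le_total φ (r*θ) with h | h
    · rw [max_eq_right h, min_eq_left h, abs_sub_comm, abs_of_nonneg (sub_nonneg.2 h)]
    · rw [max_eq_left h, min_eq_right h, abs_of_nonneg (sub_nonneg.2 h)]
  rw [habs]
  have h9 : (3/8 * (r*θ)) * (max φ (r*θ) - min φ (r*θ)) ≤ (r^2 + r^4) * θ^4 :=
    le_trans (mul_le_mul_of_nonneg_right hsin hBA.le) h8
  have hpos : (0:ℝ) < 3/8 * (r*θ) := by positivity
  have hrne : r ≠ 0 := hr.ne'
  have hθne : θ ≠ 0 := hθ.ne'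
  calc max φ (r*θ) - min φ (r*θ)
      ≤ ((r^2 + r^4) * θ^4) / (3/8 * (r*θ)) := by
        rw [le_div_iff₀ hpos, mul_comm]; exact h9
    _ = (8/3) * (r + r^3) * θ^3 := by field_simp
    _ ≤ 3*(r + r^3) * θ^3 := by
        have hnn : (0:ℝ) ≤ (r + r^3) * θ^3 := by positivity
        linarith

theorem gamma_wedge_asymptotics (a b : ℝ) (ha : 0 < a) (hb : 0 < b) :
    (fun x : ℝ => gammaAB a b x - (b - |x|)) =O[nhds 0] fun x : ℝ => |x| ^ 3 := by
  have hπ := Real.pi_pos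
  rw [isBigO_iff]
  refine ⟨(2*b/π) * (3*((a/b) + (a/b)^3)) * (π/(2*a))^3, ?_⟩
  have hδ : (0:ℝ) < min (a/π) (b/π) := lt_min (div_pos ha hπ) (div_pos hb hπ)
  filter_upwards [Metric.ball_mem_nhds (0:ℝ) hδ] with x hx
  rw [Metric.mem_ball, Real.dist_eq, sub_zero] at hx
  have hxa : |x| < a/π := hx.trans_le (min_le_left _ _)
  have hxb : |x| < b/π := hx.trans_le (min_le_right _ _)
  have hx0 : 0 ≤ |x| := abs_nonneg x
  set r := a/b with hr_def
  set θ := π * |x| / (2*a) with hθ_def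
  have hr : 0 < r := div_pos ha hb
  have hθ0 : 0 ≤ θ := by positivity
  have hθ1 : θ ≤ 1/2 := by
    rw [hθ_def, div_le_iff₀ (by linarith : (0:ℝ) < 2*a)]
    rw [lt_div_iff₀ hπ] at hxa
    nlinarith
  have hrθval : r * θ = π * |x| / (2*b) := by
    rw [hr_def, hθ_def]; field_simp
  have h2 : r * θ ≤ 1/2 := by
    rw [hrθval, div_le_iff₀ (by linarith : (0:ℝ) < 2*b)]
    rw [lt_div_iff₀ hπ] at hxb
    nlinarith
  have hkey := key_est hr hθ0 hθ1 h2
  have hcos : Real.cos (π * x / (2*a)) = Real.cos θ := by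
    rw [← Real.cos_abs, hθ_def, abs_div, abs_mul, abs_of_pos hπ,
      abs_of_pos (by linarith : (0:ℝ) < 2*a)]
  have hexpr : gammaAB a b x - (b - |x|)
      = (2*b/π) * (r*θ - Real.arccos (Real.cos θ ^ (r^2))) := by
    unfold gammaAB
    rw [hcos, ← hr_def, hrθval, show Real.arcsin (Real.cos θ ^ (r^2))
      = π/2 - Real.arccos (Real.cos θ ^ (r^2)) by
        rw [Real.arccos_eq_pi_div_two_sub_arcsin]; ring]
    field_simp
    ring
  rw [hexpr]
  have hθcube : θ^3 = (π/(2*a))^3 * |x|^3 := by rw [hθ_def]; ring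
  rw [Real.norm_eq_abs, Real.norm_eq_abs, abs_mul, abs_of_pos (by positivity : (0:ℝ) < 2*b/π),
    abs_sub_comm, abs_pow, abs_abs]
  calc 2*b/π * |Real.arccos (Real.cos θ ^ (r^2)) - r*θ|
      ≤ 2*b/π * (3*(r + r^3) * θ^3) := by
        apply mul_le_mul_of_nonneg_left hkey (by positivity)
    _ = 2*b/π * (3*((a/b) + (a/b)^3)) * (π/(2*a))^3 * |x|^3 := by
        rw [hθcube, hr_def]; ring
end
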